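/- In an undirected graph with all self-loops, for a target vertex t and a set C of vertices each having at least one neighbor besides itself, the number of length-l walks from C ending at t satisfies ρ_l(C,{t}) ≤ ρ_{l+1}(C,{t}) and ρ_l(C,{t}) ≤ (1/2)·ρ_{l+2}(C,{t}) for all l ∈ N_{≥0}, and consequently Σ_{l=1}^{L} ρ_{L-l}(C,{t}) ≤ 4·ρ_{L-1}(C,{t}) for any L ∈ N. -/
import Mathlib

set_option linter.unusedSectionVars false

/-- The number of length-`l` walks in the graph `G` whose first vertex lies in
`C` and whose last vertex lies in `T`. -/
noncomputable def walkCount {V : Type*} (G : V → V → Prop) (C T : Set V) (l : ℕ) : ℕ :=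
  Nat.card {w : Fin (l + 1) → V //
    (∀ k : Fin l, G (w k.castSucc) (w k.succ)) ∧ w 0 ∈ C ∧ w (Fin.last l) ∈ T}

section Aux

variable {V : Type*} [Fintype V] {G : V → V → Prop} {C T : Set V}

/-- Prepend a vertex to a walk. -/
def extWalk {V : Type*} {l : ℕ} (x : V) (w : Fin (l + 1) → V) : Fin (l + 2) → V :=
  Fin.cases x w

@[simp] lemma extWalk_zero {l : ℕ} (x : V) (w : Fin (l + 1) → V) :
    extWalk x w 0 = x := rfl

@[simp] lemma extWalk_succ {l : ℕ} (x : V) (w : Fin (l + 1) → V) (k : Fin (l + 1)) :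
    extWalk x w k.succ = w k := by
  simp [extWalk]

lemma extWalk_isWalk {l : ℕ} {x : V} {w : Fin (l + 1) → V}
    (hx : G x (w 0)) (hw : ∀ k : Fin l, G (w k.castSucc) (w k.succ)) :
    ∀ k : Fin (l + 1), G (extWalk x w k.castSucc) (extWalk x w k.succ) := by
  intro k
  induction k using Fin.cases with
  | zero =>
      have h0 : ((0 : Fin (l + 1)).castSucc : Fin (l + 2)) = 0 := rfl
      rw [h0, extWalk_zero, extWalk_succ]
      exact hx
  | succ m =>
      rw [← Fin.succ_castSucc, extWalk_succ, extWalk_succ]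
      exact hw m

lemma extWalk_last {l : ℕ} (x : V) (w : Fin (l + 1) → V) :
    extWalk x w (Fin.last (l + 1)) = w (Fin.last l) := by
  rw [← Fin.succ_last, extWalk_succ]

lemma walkCount_le_succ (hloop : ∀ i, G i i) (l : ℕ) :
    walkCount G C T l ≤ walkCount G C T (l + 1) := by
  unfold walkCount
  apply Nat.card_le_card_of_injective
    (f := fun w : {w : Fin (l + 1) → V //
        (∀ k : Fin l, G (w k.castSucc) (w k.succ)) ∧ w 0 ∈ C ∧ w (Fin.last l) ∈ T} =>
      (⟨extWalk (w.1 0) w.1,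
        extWalk_isWalk (hloop _) w.2.1,
        w.2.2.1,
        by rw [extWalk_last]; exact w.2.2.2⟩ :
        {w : Fin (l + 1 + 1) → V //
          (∀ k : Fin (l + 1), G (w k.castSucc) (w k.succ)) ∧ w 0 ∈ C ∧
            w (Fin.last (l + 1)) ∈ T}))
  intro w w' h
  have h' : extWalk (w.1 0) w.1 = extWalk (w'.1 0) w'.1 := congrArg Subtype.val h
  ext k
  calc w.1 k = extWalk (w.1 0) w.1 k.succ := (extWalk_succ _ _ _).symm
    _ = extWalk (w'.1 0) w'.1 k.succ := by rw [h']
    _ = w'.1 k := extWalk_succ _ _ _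

lemma two_mul_walkCount_le (hsymm : ∀ i j, G i j → G j i) (hloop : ∀ i, G i i)
    (hC : ∀ i ∈ C, ∃ j, j ≠ i ∧ G i j) (l : ℕ) :
    2 * walkCount G C T l ≤ walkCount G C T (l + 2) := by
  classical
  obtain ⟨j, hj⟩ : ∃ j : V → V, ∀ i ∈ C, j i ≠ i ∧ G i (j i) := by
    refine ⟨fun i => if h : i ∈ C then (hC i h).choose else i, fun i hi => ?_⟩
    simp only [dif_pos hi]
    exact (hC i hi).choose_spec
  unfold walkCount
  conv_lhs => rw [show (2 : ℕ) = Nat.card Bool by simp [Nat.card_eq_fintype_card],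
    ← Nat.card_prod]
  refine Nat.card_le_card_of_injective
    (fun p : Bool × {w : Fin (l + 1) → V //
        (∀ k : Fin l, G (w k.castSucc) (w k.succ)) ∧ w 0 ∈ C ∧ w (Fin.last l) ∈ T} =>
      (⟨extWalk (p.2.1 0) (extWalk (if p.1 then p.2.1 0 else j (p.2.1 0)) p.2.1),
        ?_, ?_, ?_⟩ :
        {w : Fin (l + 2 + 1) → V //
          (∀ k : Fin (l + 2), G (w k.castSucc) (w k.succ)) ∧ w 0 ∈ C ∧
            w (Fin.last (l + 2)) ∈ T})) ?_
  · obtain ⟨b, w, hw, hw0, hwl⟩ := p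
    have hjx : G (w 0) (if b then w 0 else j (w 0)) := by
      cases b with
      | true => simpa using hloop (w 0)
      | false => simpa using (hj (w 0) hw0).2
    exact extWalk_isWalk hjx (extWalk_isWalk (hsymm _ _ hjx) hw)
  · exact p.2.2.2.1
  · rw [extWalk_last, extWalk_last]
    exact p.2.2.2.2
  · rintro ⟨b, w, hw, hw0, hwl⟩ ⟨b', w', hw', hw0', hwl'⟩ h
    have h' : extWalk (w 0) (extWalk (if b then w 0 else j (w 0)) w)
        = extWalk (w' 0) (extWalk (if b' then w' 0 else j (w' 0)) w') :=
      congrArg Subtype.val h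
    have hww : w = w' := by
      funext k
      have hk := congrFun h' k.succ.succ
      rw [extWalk_succ, extWalk_succ, extWalk_succ, extWalk_succ] at hk
      exact hk
    subst hww
    have hx := congrFun h' ((0 : Fin (l + 2)).succ)
    rw [extWalk_succ, extWalk_succ, extWalk_zero, extWalk_zero] at hx
    have hne := (hj (w 0) hw0).1
    have hbb : b = b' := by
      cases b <;> cases b' <;> simp only [reduceIte] at hx <;>
        first
          | rfl
          | exact absurd hx.symm hne
          | exact absurd hx hne
    subst hbb
    rfl

end Aux

/-- In an undirected graph with all self-loops, for a target vertex `t` and a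
set `C` of vertices each having a neighbor other than itself:
`ρ_l(C,{t}) ≤ ρ_{l+1}(C,{t})`, `ρ_l(C,{t}) ≤ (1/2)·ρ_{l+2}(C,{t})`, and
consequently `∑_{l=1}^{L} ρ_{L-l}(C,{t}) ≤ 4·ρ_{L-1}(C,{t})`. -/
theorem walkCount_to_vertex_bounds {V : Type*} [Fintype V]
    (G : V → V → Prop) (hsymm : ∀ i j, G i j → G j i) (hloop : ∀ i, G i i)
    (t : V) (C : Set V) (hC : ∀ i ∈ C, ∃ j, j ≠ i ∧ G i j) :
    (∀ l : ℕ, walkCount G C {t} l ≤ walkCount G C {t} (l + 1)) ∧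
    (∀ l : ℕ, (walkCount G C {t} l : ℝ) ≤ (1 / 2) * (walkCount G C {t} (l + 2) : ℝ)) ∧
    (∀ L : ℕ, 1 ≤ L →
      ∑ l ∈ Finset.Icc 1 L, walkCount G C {t} (L - l)
        ≤ 4 * walkCount G C {t} (L - 1)) := by
  set ρ : ℕ → ℕ := fun l => walkCount G C {t} l with hρ
  have hmono : ∀ l : ℕ, ρ l ≤ ρ (l + 1) := fun l => walkCount_le_succ hloop l
  have hdouble : ∀ l : ℕ, 2 * ρ l ≤ ρ (l + 2) := fun l =>
    two_mul_walkCount_le hsymm hloop hC l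
  refine ⟨hmono, ?_, ?_⟩
  · intro l
    have h2 : (2 : ℝ) * (ρ l : ℝ) ≤ (ρ (l + 2) : ℝ) := by exact_mod_cast hdouble l
    show (ρ l : ℝ) ≤ (1 / 2) * (ρ (l + 2) : ℝ)
    linarith
  · intro L hL
    have key : ∀ n : ℕ, (∑ m ∈ Finset.range (n + 1), ρ m) ≤ 2 * ρ n + 2 * ρ (n - 1) := by
      intro n
      induction n using Nat.strong_induction_on with
      | _ n ih =>
        match n with
        | 0 =>
            simp only [Finset.sum_range_succ, Finset.sum_range_zero, zero_add]
            show ρ 0 ≤ 2 * ρ 0 + 2 * ρ 0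
            omega
        | 1 =>
            simp only [Finset.sum_range_succ, Finset.sum_range_zero, zero_add]
            show ρ 0 + ρ 1 ≤ 2 * ρ 1 + 2 * ρ 0
            omega
        | 2 =>
            simp only [Finset.sum_range_succ, Finset.sum_range_zero, zero_add]
            have h01 : ρ 0 ≤ ρ 1 := hmono 0
            show ρ 0 + ρ 1 + ρ 2 ≤ 2 * ρ 2 + 2 * ρ 1
            omega
        | (n + 3) =>
            have h1 : (∑ m ∈ Finset.range (n + 2), ρ m) ≤ 2 * ρ (n + 1) + 2 * ρ n := by
              have := ih (n + 1) (by omega)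
              simpa using this
            have d1 : 2 * ρ (n + 1) ≤ ρ (n + 3) := hdouble (n + 1)
            have d2 : 2 * ρ n ≤ ρ (n + 2) := hdouble n
            have hsum : ∑ m ∈ Finset.range (n + 3 + 1), ρ m
                = (∑ m ∈ Finset.range (n + 2), ρ m) + ρ (n + 2) + ρ (n + 3) := by
              rw [Finset.sum_range_succ, Finset.sum_range_succ]
            show ∑ m ∈ Finset.range (n + 3 + 1), ρ m ≤ 2 * ρ (n + 3) + 2 * ρ (n + 2)
            omega
    have hre : ∑ l ∈ Finset.Icc 1 L, ρ (L - l) = ∑ m ∈ Finset.range L, ρ m := by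
      apply Finset.sum_nbij' (i := fun l => L - l) (j := fun m => L - m)
      · intro l hl; simp only [Finset.mem_Icc] at hl; simp only [Finset.mem_range]; omega
      · intro m hm; simp only [Finset.mem_range] at hm; simp only [Finset.mem_Icc]; omega
      · intro l hl; simp only [Finset.mem_Icc] at hl; omega
      · intro m hm; simp only [Finset.mem_range] at hm; omega
      · intro l hl; rfl
    rw [hre]
    obtain ⟨n, rfl⟩ : ∃ n, L = n + 1 := ⟨L - 1, by omega⟩
    have hk := key n
    have hlast : ρ (n - 1) ≤ ρ n := by
      cases n with
      | zero => exact le_refl _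
      | succ m => simpa using hmono m
    show ∑ m ∈ Finset.range (n + 1), ρ m ≤ 4 * ρ n
    omega
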